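/- One-step energy inequality for the DEKI spread: suppose the operator norms satisfy ‖A_{t+1}‖ ≤ A_max for some A_max > 0 (so that αI ⪯ A_{t+1}^{(α)} and ‖A_{t+1}^{(α)}‖ ≤ A_max + α). Then the DEKI spread energy satisfies E_{t+1} ≤ E_t − (2hα/J)·E_t² + h²(A_max + α)²·E_t³. -/

import Mathlib

open Matrix BigOperators

noncomputable section

/-- Sample mean of an ensemble. -/
def ensMean {d : ℕ} (J : ℕ) (z : Fin J → Fin d → ℝ) : Fin d → ℝ :=
  (J : ℝ)⁻¹ • ∑ j, z j

/-- Ensemble spread `e^{(j)} = z^{(j)} - z̄`. -/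
def ensSpread {d : ℕ} (J : ℕ) (z : Fin J → Fin d → ℝ) (j : Fin J) : Fin d → ℝ :=
  z j - ensMean J z

/-- Sample covariance `C = (1/J) ∑_j e^{(j)} (e^{(j)})ᵀ`. -/
def ensCov {d : ℕ} (J : ℕ) (z : Fin J → Fin d → ℝ) : Matrix (Fin d) (Fin d) ℝ :=
  (J : ℝ)⁻¹ • ∑ j, vecMulVec (ensSpread J z j) (ensSpread J z j)

/-- Squared Euclidean norm of a vector in `ℝ^d`. -/
def enormSq {d : ℕ} (v : Fin d → ℝ) : ℝ := ∑ i, (v i)^2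

/-- Ensemble spread energy `E = (1/J)∑_j ‖e^{(j)}‖²`. -/
def ensEnergy {d : ℕ} (J : ℕ) (z : Fin J → Fin d → ℝ) : ℝ :=
  (J : ℝ)⁻¹ * ∑ j, enormSq (ensSpread J z j)

/-- The (Euclidean) operator norm of a square matrix. -/
def opNorm {d : ℕ} (M : Matrix (Fin d) (Fin d) ℝ) : ℝ :=
  ‖Matrix.toEuclideanCLM (𝕜 := ℝ) M‖

/-! ### Auxiliary lemmas -/

/-- The affine structure of the DEKI update and resulting spread recursion. -/
lemma DEKI.spread_step {d p J : ℕ} (hJ : 0 < J) (α h : ℝ)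
    (St : Matrix (Fin p) (Fin d) ℝ) (ut : Fin p → ℝ) (zt zt1 : Fin J → Fin d → ℝ)
    (hupd : ∀ j, zt1 j = zt j -
      h • ((ensCov J zt) *ᵥ (Stᵀ *ᵥ (St *ᵥ (zt j) - ut) + α • zt j))) (j : Fin J) :
    ensSpread J zt1 j = ensSpread J zt j -
      h • ((ensCov J zt) *ᵥ ((Stᵀ * St) *ᵥ ensSpread J zt j + α • ensSpread J zt j)) := by
  set C := ensCov J zt with hC
  set c : Fin d → ℝ := C *ᵥ (Stᵀ *ᵥ ut) with hc
  set L : (Fin d → ℝ) →ₗ[ℝ] (Fin d → ℝ) :=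
    { toFun := fun v => C *ᵥ ((Stᵀ * St) *ᵥ v + α • v)
      map_add' := fun x y => by
        simp [Matrix.mulVec_add, smul_add, add_add_add_comm]
      map_smul' := fun r x => by
        simp only [RingHom.id_apply, ← Matrix.mulVec_smul, smul_add, smul_comm r α] } with hL
  have hupd' : ∀ k, zt1 k = (zt k - h • L (zt k)) + h • c := by
    intro k
    rw [hupd k]
    have h1 : Stᵀ *ᵥ (St *ᵥ (zt k) - ut) + α • zt k
        = ((Stᵀ * St) *ᵥ zt k + α • zt k) - Stᵀ *ᵥ ut := by
      rw [Matrix.mulVec_sub, Matrix.mulVec_mulVec]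
      abel
    rw [h1, Matrix.mulVec_sub]
    show zt k - h • (L (zt k) - c) = zt k - h • L (zt k) + h • c
    rw [smul_sub]
    abel
  have hmean : ensMean J zt1 = (ensMean J zt - h • L (ensMean J zt)) + h • c := by
    unfold ensMean
    have : (∑ k, zt1 k) = (∑ k, zt k) - h • L (∑ k, zt k) + (J : ℕ) • (h • c) := by
      rw [map_sum]
      simp only [hupd']
      rw [Finset.sum_add_distrib, Finset.sum_sub_distrib, Finset.sum_const,
        Finset.card_univ, Fintype.card_fin, Finset.smul_sum]
    rw [this]
    have hJ' : (J : ℝ) ≠ 0 := Nat.cast_ne_zero.mpr hJ.ne'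
    rw [smul_add, smul_sub, LinearMap.map_smul, smul_comm ((J:ℝ)⁻¹) h]
    congr 1
    rw [← Nat.cast_smul_eq_nsmul ℝ J (h • c), inv_smul_smul₀ hJ']
  show zt1 j - ensMean J zt1 = ensSpread J zt j - h • L (ensSpread J zt j)
  rw [hupd' j, hmean]
  have : ensSpread J zt j = zt j - ensMean J zt := rfl
  rw [this, map_sub, smul_sub]
  abel

lemma DEKI.enormSq_sub_smul {d : ℕ} (a b : Fin d → ℝ) (h : ℝ) :
    enormSq (a - h • b) = enormSq a - 2*h*(a ⬝ᵥ b) + h^2 * enormSq b := by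
  have key : ∀ i : Fin d, (a i - h * b i)^2 = a i^2 - 2*h*(a i * b i) + h^2 * b i^2 :=
    fun i => by ring
  simp only [enormSq, dotProduct, Pi.sub_apply, Pi.smul_apply, smul_eq_mul, key,
    Finset.sum_add_distrib, Finset.sum_sub_distrib, Finset.mul_sum]

lemma DEKI.dot_self_eq_enormSq {d : ℕ} (v : Fin d → ℝ) : v ⬝ᵥ v = enormSq v := by
  simp [dotProduct, enormSq, sq]

/-- Embedding of `Fin d → ℝ` into Euclidean space. -/
def DEKI.toE {d : ℕ} (v : Fin d → ℝ) : EuclideanSpace ℝ (Fin d) := (WithLp.equiv 2 _).symm v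

namespace DEKI

lemma norm_toE_sq {d : ℕ} (v : Fin d → ℝ) : ‖toE v‖^2 = enormSq v := by
  rw [EuclideanSpace.norm_eq, Real.sq_sqrt (by positivity)]
  simp [toE, enormSq, sq_abs]

lemma enormSq_nonneg {d : ℕ} (v : Fin d → ℝ) : 0 ≤ enormSq v := by
  rw [← norm_toE_sq]; positivity

lemma abs_dot_le {d : ℕ} (v w : Fin d → ℝ) : |v ⬝ᵥ w| ≤ ‖toE v‖ * ‖toE w‖ := by
  have : inner ℝ (toE v) (toE w) = v ⬝ᵥ w := by
    simp [toE, PiLp.inner_apply, dotProduct, RCLike.inner_apply, mul_comm]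
  rw [← this]; exact abs_real_inner_le_norm _ _

lemma toE_mulVec {d : ℕ} (M : Matrix (Fin d) (Fin d) ℝ) (v : Fin d → ℝ) :
    toE (M *ᵥ v) = Matrix.toEuclideanCLM (𝕜 := ℝ) M (toE v) := by
  rfl

lemma sum_mulVec' {d J : ℕ} (M : Fin J → Matrix (Fin d) (Fin d) ℝ) (v : Fin d → ℝ) :
    (∑ j, M j) *ᵥ v = ∑ j, (M j) *ᵥ v := by
  ext i
  simp only [Matrix.mulVec, dotProduct, Matrix.sum_apply, Finset.sum_apply, Finset.sum_mul]
  exact Finset.sum_comm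

lemma vecMulVec_mulVec' {d : ℕ} (a b v : Fin d → ℝ) :
    vecMulVec a b *ᵥ v = (b ⬝ᵥ v) • a := by
  ext i
  simp only [Matrix.mulVec, Matrix.vecMulVec_apply, dotProduct, Pi.smul_apply, smul_eq_mul]
  rw [Finset.sum_mul]
  exact Finset.sum_congr rfl fun j _ => by ring

lemma dot_sum {d J : ℕ} (u : Fin d → ℝ) (f : Fin J → Fin d → ℝ) :
    u ⬝ᵥ (∑ j, f j) = ∑ j, u ⬝ᵥ (f j) := by
  simp only [dotProduct, Finset.sum_apply, Finset.mul_sum]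
  exact Finset.sum_comm

lemma cov_mulVec {d J : ℕ} (e : Fin J → Fin d → ℝ) (v : Fin d → ℝ) :
    ((J:ℝ)⁻¹ • ∑ j, vecMulVec (e j) (e j)) *ᵥ v
      = (J:ℝ)⁻¹ • ∑ j, (e j ⬝ᵥ v) • e j := by
  rw [Matrix.smul_mulVec, sum_mulVec']
  congr 1
  exact Finset.sum_congr rfl fun j _ => vecMulVec_mulVec' _ _ _

lemma cov_norm_bound {d J : ℕ} (e : Fin J → Fin d → ℝ) (v : Fin d → ℝ) :
    ‖toE (((J:ℝ)⁻¹ • ∑ j, vecMulVec (e j) (e j)) *ᵥ v)‖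
      ≤ ((J:ℝ)⁻¹ * ∑ j, enormSq (e j)) * ‖toE v‖ := by
  rw [cov_mulVec]
  have h1 : toE ((J:ℝ)⁻¹ • ∑ j, (e j ⬝ᵥ v) • e j)
      = (J:ℝ)⁻¹ • ∑ j, (e j ⬝ᵥ v) • toE (e j) := by
    simp [toE]
  rw [h1, norm_smul, mul_assoc]
  gcongr
  · simp [abs_of_nonneg (by positivity : (0:ℝ) ≤ (J:ℝ)⁻¹)]
  calc ‖∑ j, (e j ⬝ᵥ v) • toE (e j)‖ ≤ ∑ j, ‖(e j ⬝ᵥ v) • toE (e j)‖ :=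
        norm_sum_le _ _
    _ ≤ ∑ j, enormSq (e j) * ‖toE v‖ := by
        apply Finset.sum_le_sum
        intro j _
        rw [norm_smul, Real.norm_eq_abs]
        calc |e j ⬝ᵥ v| * ‖toE (e j)‖ ≤ (‖toE (e j)‖ * ‖toE v‖) * ‖toE (e j)‖ := by
              have := abs_dot_le (e j) v
              have hn : (0:ℝ) ≤ ‖toE (e j)‖ := norm_nonneg _
              nlinarith [abs_nonneg (e j ⬝ᵥ v)]
          _ = enormSq (e j) * ‖toE v‖ := by rw [← norm_toE_sq]; ring
    _ = (∑ j, enormSq (e j)) * ‖toE v‖ := by rw [Finset.sum_mul]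

lemma sum_sum_sum_comm {ι κ γ : Type*} [Fintype ι] [Fintype κ] [Fintype γ]
    (X : ι → κ → γ → ℝ) :
    ∑ j, ∑ k, ∑ q, X j k q = ∑ q, ∑ j, ∑ k, X j k q := by
  rw [show (∑ j, ∑ k, ∑ q, X j k q) = ∑ j, ∑ q, ∑ k, X j k q from
    Finset.sum_congr rfl fun j _ => Finset.sum_comm]
  exact Finset.sum_comm

lemma quad_nonneg {d p J : ℕ} (f : Fin J → Fin p → ℝ) (e : Fin J → Fin d → ℝ) :
    0 ≤ ∑ j, ∑ k, (f j ⬝ᵥ f k) * (e j ⬝ᵥ e k) := by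
  have h1 : ∀ (j k : Fin J), (f j ⬝ᵥ f k) * (e j ⬝ᵥ e k)
      = ∑ q : Fin p × Fin d, (f j q.1 * e j q.2) * (f k q.1 * e k q.2) := by
    intro j k
    rw [Fintype.sum_prod_type, dotProduct, dotProduct, Finset.sum_mul_sum]
    exact Finset.sum_congr rfl fun a _ => Finset.sum_congr rfl fun i _ => by ring
  have h2 : ∀ q : Fin p × Fin d, (∑ j, f j q.1 * e j q.2)^2
      = ∑ j, ∑ k, (f j q.1 * e j q.2) * (f k q.1 * e k q.2) := by
    intro q; rw [sq, Finset.sum_mul_sum]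
  have key : ∑ j, ∑ k, (f j ⬝ᵥ f k) * (e j ⬝ᵥ e k)
      = ∑ q : Fin p × Fin d, (∑ j, f j q.1 * e j q.2)^2 := by
    simp only [h1, h2]
    exact sum_sum_sum_comm _
  rw [key]
  exact Finset.sum_nonneg fun q _ => sq_nonneg _

end DEKI

/-- One-step energy inequality for the DEKI spread: if `‖A_{t+1}‖ = ‖S_{t+1}ᵀS_{t+1}‖ ≤ A_max`,
then `E_{t+1} ≤ E_t − (2hα/J)·E_t² + h²(A_max + α)²·E_t³`. -/
theorem deki_energy_one_step
    {d p J : ℕ} (hd : 0 < d) (hp : 0 < p) (hJ : 0 < J)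
    (α h Amax : ℝ) (hα : 0 < α) (hh : 0 < h) (hAmax : 0 < Amax)
    (S : ℕ → Matrix (Fin p) (Fin d) ℝ) (u : ℕ → Fin p → ℝ)
    (z : ℕ → Fin J → Fin d → ℝ)
    (hupd : ∀ t j, z (t+1) j = z t j -
      h • ((ensCov J (z t)) *ᵥ ((S (t+1))ᵀ *ᵥ ((S (t+1)) *ᵥ (z t j) - u (t+1)) + α • z t j)))
    (t : ℕ)
    (hA : opNorm ((S (t+1))ᵀ * (S (t+1))) ≤ Amax) :
    ensEnergy J (z (t+1)) ≤ ensEnergy J (z t)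
      - (2*h*α/(J:ℝ)) * (ensEnergy J (z t))^2
      + h^2 * (Amax + α)^2 * (ensEnergy J (z t))^3 := by
  classical
  open DEKI in
  set St := S (t+1) with hSt
  set M : Matrix (Fin d) (Fin d) ℝ := Stᵀ * St with hM
  set e : Fin J → Fin d → ℝ := ensSpread J (z t) with he
  set C : Matrix (Fin d) (Fin d) ℝ := ensCov J (z t) with hC
  set w : Fin J → Fin d → ℝ := fun j => C *ᵥ (M *ᵥ e j + α • e j) with hw
  set T : ℝ := ∑ j, enormSq (e j) with hT
  have hJpos : (0:ℝ) < (J:ℝ) := Nat.cast_pos.mpr hJ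
  have hTnn : 0 ≤ T := Finset.sum_nonneg fun j _ => DEKI.enormSq_nonneg _
  have hCov : C = (J:ℝ)⁻¹ • ∑ j, vecMulVec (e j) (e j) := rfl
  have hE0 : ensEnergy J (z t) = (J:ℝ)⁻¹ * T := rfl
  -- the spread recursion
  have hstep : ∀ j, ensSpread J (z (t+1)) j = e j - h • w j := fun j =>
    DEKI.spread_step hJ α h St (u (t+1)) (z t) (z (t+1)) (fun k => hupd t k) j
  -- energy expansion
  set X : ℝ := ∑ j, e j ⬝ᵥ w j with hX
  set Y : ℝ := ∑ j, enormSq (w j) with hY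
  have hE1 : ensEnergy J (z (t+1)) = (J:ℝ)⁻¹ * (T - 2*h*X + h^2*Y) := by
    show (J:ℝ)⁻¹ * ∑ j, enormSq (ensSpread J (z (t+1)) j) = _
    congr 1
    calc ∑ j, enormSq (ensSpread J (z (t+1)) j)
        = ∑ j, (enormSq (e j) - 2*h*(e j ⬝ᵥ w j) + h^2 * enormSq (w j)) := by
          refine Finset.sum_congr rfl fun j _ => ?_
          rw [hstep j, DEKI.enormSq_sub_smul]
      _ = T - 2*h*X + h^2*Y := by
          rw [Finset.sum_add_distrib, Finset.sum_sub_distrib, hT, hX, hY,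
            Finset.mul_sum, Finset.mul_sum]
  -- lower bound on the cross term
  have hXlb : α * T^2 / (J:ℝ)^2 ≤ X := by
    set f : Fin J → Fin p → ℝ := fun k => St *ᵥ e k with hf
    have hdotM : ∀ (j k : Fin J), e k ⬝ᵥ (M *ᵥ e j) = f k ⬝ᵥ f j := by
      intro j k
      rw [hM, ← Matrix.mulVec_mulVec, Matrix.dotProduct_mulVec, Matrix.vecMul_transpose]
    have hXj : ∀ j, e j ⬝ᵥ w j
        = (J:ℝ)⁻¹ * ∑ k, (f k ⬝ᵥ f j + α * (e k ⬝ᵥ e j)) * (e j ⬝ᵥ e k) := by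
      intro j
      rw [hw]
      show e j ⬝ᵥ (C *ᵥ (M *ᵥ e j + α • e j)) = _
      rw [hCov, DEKI.cov_mulVec]
      rw [show ((J:ℝ)⁻¹ • ∑ k, (e k ⬝ᵥ (M *ᵥ e j + α • e j)) • e k)
          = (J:ℝ)⁻¹ • ∑ k, ((f k ⬝ᵥ f j + α * (e k ⬝ᵥ e j)) • e k) from by
        congr 1
        refine Finset.sum_congr rfl fun k _ => ?_
        congr 1
        rw [dotProduct_add, hdotM j k, dotProduct_smul, smul_eq_mul]]
      rw [dotProduct_smul, smul_eq_mul, DEKI.dot_sum]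
      congr 1
      refine Finset.sum_congr rfl fun k _ => ?_
      rw [dotProduct_smul, smul_eq_mul]
    have hXeq : X = (J:ℝ)⁻¹ * ((∑ j, ∑ k, (f k ⬝ᵥ f j) * (e j ⬝ᵥ e k))
        + α * ∑ j, ∑ k, (e k ⬝ᵥ e j) * (e j ⬝ᵥ e k)) := by
      rw [hX]
      simp only [hXj]
      rw [← Finset.mul_sum]
      congr 1
      have hsplit : ∀ (j k : Fin J), (f k ⬝ᵥ f j + α * (e k ⬝ᵥ e j)) * (e j ⬝ᵥ e k)
          = (f k ⬝ᵥ f j) * (e j ⬝ᵥ e k) + α * ((e k ⬝ᵥ e j) * (e j ⬝ᵥ e k)) :=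
        fun j k => by ring
      simp only [hsplit, Finset.sum_add_distrib, ← Finset.mul_sum]
    set A : ℝ := ∑ j, ∑ k, (f k ⬝ᵥ f j) * (e j ⬝ᵥ e k) with hAdef
    set B : ℝ := ∑ j, ∑ k, (e k ⬝ᵥ e j) * (e j ⬝ᵥ e k) with hBdef
    have hAnn : 0 ≤ A := by
      have : A = ∑ j, ∑ k, (f j ⬝ᵥ f k) * (e j ⬝ᵥ e k) := by
        refine Finset.sum_congr rfl fun j _ => Finset.sum_congr rfl fun k _ => ?_
        rw [dotProduct_comm (f k) (f j)]
      rw [this]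
      exact DEKI.quad_nonneg f e
    have hBlb : T^2 ≤ (J:ℝ) * B := by
      have h1 : B = ∑ j, ∑ k, (e j ⬝ᵥ e k)^2 := by
        refine Finset.sum_congr rfl fun j _ => Finset.sum_congr rfl fun k _ => ?_
        rw [dotProduct_comm (e k) (e j), sq]
      have h2 : ∑ j, (enormSq (e j))^2 ≤ B := by
        rw [h1]
        refine Finset.sum_le_sum fun j _ => ?_
        rw [← DEKI.dot_self_eq_enormSq]
        exact Finset.single_le_sum (f := fun k => (e j ⬝ᵥ e k)^2)
          (fun k _ => sq_nonneg _) (Finset.mem_univ j)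
      have h3 : T^2 ≤ (J:ℝ) * ∑ j, (enormSq (e j))^2 := by
        have := sq_sum_le_card_mul_sum_sq
          (s := (Finset.univ : Finset (Fin J))) (f := fun j => enormSq (e j))
        simpa [hT] using this
      calc T^2 ≤ (J:ℝ) * ∑ j, (enormSq (e j))^2 := h3
        _ ≤ (J:ℝ) * B := by
            exact mul_le_mul_of_nonneg_left h2 (le_of_lt hJpos)
    calc α * T^2 / (J:ℝ)^2 ≤ α * ((J:ℝ) * B) / (J:ℝ)^2 := by
          gcongr
      _ = α * B / (J:ℝ) := by field_simp
      _ ≤ (A + α * B) / (J:ℝ) := by gcongr; linarith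
      _ = X := by rw [hXeq]; field_simp
  -- upper bound on the quadratic term
  have hYub : Y ≤ ((J:ℝ)⁻¹*T)^2 * (Amax+α)^2 * T := by
    have hpt : ∀ j, enormSq (w j) ≤ ((J:ℝ)⁻¹*T)^2 * (Amax+α)^2 * enormSq (e j) := by
      intro j
      have hv : ‖toE (M *ᵥ e j + α • e j)‖ ≤ (Amax + α) * ‖toE (e j)‖ := by
        have heq : toE (M *ᵥ e j + α • e j)
            = Matrix.toEuclideanCLM (𝕜 := ℝ) M (toE (e j)) + α • toE (e j) := by
          rw [show toE (M *ᵥ e j + α • e j) = toE (M *ᵥ e j) + α • toE (e j) from rfl,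
            DEKI.toE_mulVec]
        rw [heq]
        calc ‖Matrix.toEuclideanCLM (𝕜 := ℝ) M (toE (e j)) + α • toE (e j)‖
            ≤ ‖Matrix.toEuclideanCLM (𝕜 := ℝ) M (toE (e j))‖ + ‖α • toE (e j)‖ :=
              norm_add_le _ _
          _ ≤ Amax * ‖toE (e j)‖ + α * ‖toE (e j)‖ := by
              gcongr
              · calc ‖Matrix.toEuclideanCLM (𝕜 := ℝ) M (toE (e j))‖
                    ≤ ‖Matrix.toEuclideanCLM (𝕜 := ℝ) M‖ * ‖toE (e j)‖ :=
                      ContinuousLinearMap.le_opNorm _ _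
                  _ ≤ Amax * ‖toE (e j)‖ := by
                      exact mul_le_mul_of_nonneg_right hA (norm_nonneg _)
              · rw [norm_smul, Real.norm_eq_abs, abs_of_pos hα]
          _ = (Amax + α) * ‖toE (e j)‖ := by ring
      have hwj : ‖toE (w j)‖ ≤ ((J:ℝ)⁻¹*T) * ((Amax + α) * ‖toE (e j)‖) := by
        calc ‖toE (w j)‖ ≤ ((J:ℝ)⁻¹*T) * ‖toE (M *ᵥ e j + α • e j)‖ := by
              rw [hw]
              show ‖toE (C *ᵥ (M *ᵥ e j + α • e j))‖ ≤ _
              rw [hCov]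
              exact DEKI.cov_norm_bound e _
          _ ≤ ((J:ℝ)⁻¹*T) * ((Amax + α) * ‖toE (e j)‖) := by
              have : (0:ℝ) ≤ (J:ℝ)⁻¹*T := by positivity
              exact mul_le_mul_of_nonneg_left hv this
      have := pow_le_pow_left₀ (norm_nonneg (toE (w j))) hwj 2
      rw [DEKI.norm_toE_sq] at this
      calc enormSq (w j) ≤ (((J:ℝ)⁻¹*T) * ((Amax + α) * ‖toE (e j)‖))^2 := this
        _ = ((J:ℝ)⁻¹*T)^2 * (Amax+α)^2 * ‖toE (e j)‖^2 := by ring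
        _ = ((J:ℝ)⁻¹*T)^2 * (Amax+α)^2 * enormSq (e j) := by rw [DEKI.norm_toE_sq]
    calc Y ≤ ∑ j, ((J:ℝ)⁻¹*T)^2 * (Amax+α)^2 * enormSq (e j) :=
          Finset.sum_le_sum fun j _ => hpt j
      _ = ((J:ℝ)⁻¹*T)^2 * (Amax+α)^2 * T := by rw [← Finset.mul_sum, hT]
  -- combine
  have hmain : ensEnergy J (z (t+1))
      ≤ (J:ℝ)⁻¹ * (T - 2*h*(α * T^2 / (J:ℝ)^2) + h^2*(((J:ℝ)⁻¹*T)^2 * (Amax+α)^2 * T)) := by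
    rw [hE1]
    apply mul_le_mul_of_nonneg_left _ (le_of_lt (inv_pos.mpr hJpos))
    have h1 : T - 2*h*X ≤ T - 2*h*(α * T^2 / (J:ℝ)^2) := by
      have := mul_le_mul_of_nonneg_left hXlb (by linarith : (0:ℝ) ≤ 2*h)
      linarith
    have h2 : h^2*Y ≤ h^2*(((J:ℝ)⁻¹*T)^2 * (Amax+α)^2 * T) :=
      mul_le_mul_of_nonneg_left hYub (sq_nonneg h)
    linarith
  rw [hE0]
  refine le_trans hmain (le_of_eq ?_)
  have hJne : (J:ℝ) ≠ 0 := ne_of_gt hJpos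
  field_simp

end
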